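/- Let G be a countable group which is the semidirect product of an abelian normal subgroup N and an abelian subgroup L (so G = NL, N ∩ L = {e}), and suppose Λ is a proper finitely generated subgroup of N such that the triple (G, Λ, N) is contracting. Then the set S = LΛ is thick in G, i.e., for every finite F ⊂ G there exists g ∈ G with Fg⁻¹ ⊂ S, while the difference set S⁻¹S is not syndetic. -/
import Mathlib


open scoped Pointwise

/-- Let `G = N ⋊ L` be a countable group with `N` abelian normal, `L` abelian,
`N ∩ L = {e}`, `NL = G`, and let `Λ` be a proper finitely generated subgroup of `N`
such that the triple `(G, Λ, N)` is contracting. Then `S = LΛ` is thick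
(every finite set `F` satisfies `Fg⁻¹ ⊆ S` for some `g`), while `S⁻¹S` is not
syndetic. -/
theorem thick_LLambda_and_not_syndetic {G : Type*} [Group G] [Countable G]
    (N L : Subgroup G) [N.Normal]
    (hNab : ∀ a ∈ N, ∀ b ∈ N, a * b = b * a)
    (hLab : ∀ a ∈ L, ∀ b ∈ L, a * b = b * a)
    (hNL : N ⊓ L = ⊥)
    (hprod : ∀ g : G, ∃ n ∈ N, ∃ l ∈ L, g = n * l)
    (Λ : Subgroup G) (hΛN : Λ ≤ N) (hΛproper : Λ ≠ N) (hΛfg : Λ.FG)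
    (hcontr : ∀ F : Finset G, (↑F : Set G) ⊆ (N : Set G) →
      ∃ g : G, ∀ f ∈ F, g * f * g⁻¹ ∈ Λ) :
    (∀ F : Finset G, ∃ g : G, ∀ f ∈ F, f * g⁻¹ ∈ (L : Set G) * (Λ : Set G)) ∧
    ¬ ∃ F : Finset G, ∀ g : G, ∃ f ∈ F,
        ∃ s ∈ ((L : Set G) * (Λ : Set G))⁻¹ * ((L : Set G) * (Λ : Set G)),
          g = f * s := by
  classical
  have hNnorm : N.Normal := inferInstance
  choose n hn l hl heq using hprod
  constructor
  · -- Thickness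
    intro F
    set F' : Finset G := F.image (fun f => (l f)⁻¹ * n f * l f) with hF'
    have hF'N : (↑F' : Set G) ⊆ (N : Set G) := by
      intro x hx
      simp only [hF', Finset.coe_image, Set.mem_image, Finset.mem_coe] at hx
      obtain ⟨f, _, rfl⟩ := hx
      simpa using hNnorm.conj_mem (n f) (hn f) (l f)⁻¹
    obtain ⟨g, hg⟩ := hcontr F' hF'N
    set m : G := n g with hmdef
    set l₀ : G := l g with hl₀def
    have hm : m ∈ N := hn g
    have hl₀ : l₀ ∈ L := hl g
    have hgeq : g = m * l₀ := heq g
    refine ⟨l₀, fun f hf => ?_⟩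
    have hx : (l f)⁻¹ * n f * l f ∈ F' := Finset.mem_image_of_mem _ hf
    have hxN : (l f)⁻¹ * n f * l f ∈ N := by
      simpa using hNnorm.conj_mem (n f) (hn f) (l f)⁻¹
    have hconjN : l₀ * ((l f)⁻¹ * n f * l f) * l₀⁻¹ ∈ N := hNnorm.conj_mem _ hxN l₀
    have hconj : g * ((l f)⁻¹ * n f * l f) * g⁻¹
        = l₀ * ((l f)⁻¹ * n f * l f) * l₀⁻¹ := by
      have hcomm := hNab m hm _ hconjN
      rw [hgeq, show m * l₀ * ((l f)⁻¹ * n f * l f) * (m * l₀)⁻¹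
          = m * (l₀ * ((l f)⁻¹ * n f * l f) * l₀⁻¹) * m⁻¹ from by group, hcomm]
      group
    have hlamm : l₀ * ((l f)⁻¹ * n f * l f) * l₀⁻¹ ∈ Λ := hconj ▸ hg _ hx
    have hkey : f * l₀⁻¹ = (l f * l₀⁻¹) * (l₀ * ((l f)⁻¹ * n f * l f) * l₀⁻¹) := by
      conv_lhs => rw [heq f]
      group
    rw [hkey]
    exact Set.mul_mem_mul (mul_mem (hl f) (inv_mem hl₀)) hlamm
  · -- Non-syndeticity
    rintro ⟨F, hF⟩
    obtain ⟨T, hT⟩ := hΛfg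
    have hTΛ : (↑T : Set G) ⊆ (Λ : Set G) := hT ▸ Subgroup.subset_closure
    set Gens : Finset G :=
      F.image n ∪ F.biUnion (fun f => T.image (fun t => l f * t * (l f)⁻¹)) ∪ T
      with hGensdef
    have hGensN : (↑Gens : Set G) ⊆ (N : Set G) := by
      intro x hx
      simp only [hGensdef, Finset.coe_union, Set.mem_union, Finset.coe_image,
        Set.mem_image, Finset.mem_coe, Finset.coe_biUnion, Set.mem_iUnion] at hx
      rcases hx with (⟨f, _, rfl⟩ | ⟨f, _, t, ht, rfl⟩) | ht
      · exact hn f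
      · exact hNnorm.conj_mem t (hΛN (hTΛ ht)) (l f)
      · exact hΛN (hTΛ ht)
    set H : Subgroup G := Subgroup.closure (↑Gens : Set G) with hHdef
    -- conjugates of Λ by l f land in H
    have hconjΛ : ∀ f ∈ F, ∀ y ∈ Λ, l f * y * (l f)⁻¹ ∈ H := by
      intro f hf y hy
      have hle : Λ ≤ Subgroup.comap (MulAut.conj (l f)).toMonoidHom H := by
        rw [← hT, Subgroup.closure_le]
        intro t ht
        simp only [Subgroup.coe_comap, Set.mem_preimage, MulEquiv.coe_toMonoidHom,
          MulAut.conj_apply, SetLike.mem_coe]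
        apply Subgroup.subset_closure
        simp only [hGensdef, Finset.coe_union, Set.mem_union, Finset.coe_biUnion,
          Finset.coe_image, Set.mem_iUnion, Set.mem_image, Finset.mem_coe]
        exact Or.inl (Or.inr ⟨f, hf, t, ht, rfl⟩)
      have := hle hy
      simpa [Subgroup.mem_comap] using this
    have hΛH : Λ ≤ H := by
      rw [← hT]
      exact Subgroup.closure_mono (by
        intro t ht
        simp only [hGensdef, Finset.coe_union, Set.mem_union, Finset.mem_coe]
        exact Or.inr ht)
    have hNle : N ≤ H := by
      intro x hx
      obtain ⟨f, hf, s, hs, hxeq⟩ := hF x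
      obtain ⟨a, ha, b, hb, hsab⟩ := hs
      rw [Set.mem_inv] at ha
      obtain ⟨l₁, hl₁, lam1, hlam1, hab⟩ := ha
      obtain ⟨l₂, hl₂, lam2, hlam2, hbb⟩ := hb
      simp only at hsab hab hbb
      have haeq : a = lam1⁻¹ * l₁⁻¹ := by
        rw [← inv_inv a, ← hab]; group
      obtain ⟨lL, hlLdef⟩ : ∃ y : G, y = l f * l₁⁻¹ * l₂ := ⟨_, rfl⟩
      have hlLL : lL ∈ L := hlLdef ▸ mul_mem (mul_mem (hl f) (inv_mem hl₁)) hl₂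
      have hxkey : x = n f * (l f * lam1⁻¹ * (l f)⁻¹) * (lL * lam2 * lL⁻¹) * lL := by
        rw [hxeq, ← hsab, haeq, ← hbb, hlLdef]
        conv_lhs => rw [heq f]
        group
      have hc1 : l f * lam1⁻¹ * (l f)⁻¹ ∈ N := hNnorm.conj_mem _ (hΛN (inv_mem hlam1)) (l f)
      have hc2 : lL * lam2 * lL⁻¹ ∈ N := hNnorm.conj_mem _ (hΛN hlam2) lL
      have hlLN : lL ∈ N := by
        have : lL = (lL * lam2 * lL⁻¹)⁻¹ * (l f * lam1⁻¹ * (l f)⁻¹)⁻¹ * (n f)⁻¹ * x := by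
          rw [hxkey]; group
        rw [this]
        exact mul_mem (mul_mem (mul_mem (inv_mem hc2) (inv_mem hc1)) (inv_mem (hn f))) hx
      have hlL1 : lL = 1 := by
        have : lL ∈ N ⊓ L := ⟨hlLN, hlLL⟩
        rwa [hNL, Subgroup.mem_bot] at this
      have hxfin : x = n f * (l f * lam1⁻¹ * (l f)⁻¹) * lam2 := by
        rw [hxkey, hlL1]; group
      rw [hxfin]
      refine mul_mem (mul_mem ?_ ?_) ?_
      · apply Subgroup.subset_closure
        simp only [hGensdef, Finset.coe_union, Set.mem_union, Finset.coe_image,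
          Set.mem_image, Finset.mem_coe]
        exact Or.inl (Or.inl ⟨f, hf, rfl⟩)
      · exact hconjΛ f hf lam1⁻¹ (inv_mem hlam1)
      · exact hΛH hlam2
    have hHN : H = N := le_antisymm ((Subgroup.closure_le N).mpr hGensN) hNle
    -- contracting applied to Gens gives N ≤ Λ
    obtain ⟨g, hg⟩ := hcontr Gens hGensN
    have hHΛ : H ≤ Subgroup.comap (MulAut.conj g).toMonoidHom Λ := by
      rw [hHdef, Subgroup.closure_le]
      intro t ht
      simp only [Subgroup.coe_comap, Set.mem_preimage, MulEquiv.coe_toMonoidHom,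
        MulAut.conj_apply, SetLike.mem_coe]
      exact hg t ht
    have hNΛ : N ≤ Λ := by
      intro x hx
      have h1 : g⁻¹ * x * g ∈ N := by
        simpa using hNnorm.conj_mem x hx g⁻¹
      have h2 : g⁻¹ * x * g ∈ H := hHN ▸ h1
      have h3 := hHΛ h2
      simp only [Subgroup.mem_comap, MulEquiv.coe_toMonoidHom, MulAut.conj_apply] at h3
      have : g * (g⁻¹ * x * g) * g⁻¹ = x := by group
      rwa [this] at h3
    exact hΛproper (le_antisymm hΛN hNΛ)
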